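/- In (q,p)-coordinates on ℝ^{2N}, the modular vector field of the second Toda Poisson tensor Ĵ₂ with respect to the standard volume is Y = −Σ_{i=1}^N ∂/∂q_i, i.e., its components are (−1,…,−1,0,…,0). -/

import Mathlib

/-- Partial derivative of a function on `ι → ℝ` in the `i`-th coordinate direction. -/
noncomputable def pd {ι : Type*} [Fintype ι] [DecidableEq ι]
    (i : ι) (f : (ι → ℝ) → ℝ) (x : ι → ℝ) : ℝ :=
  fderiv ℝ f x (Pi.single i 1)

/-- The modular vector field (divergence) of a 2-tensor `π` with respect to
the standard volume: D(π)_j = Σ_i ∂π_{ji}/∂x_i. -/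
noncomputable def modvf {ι : Type*} [Fintype ι] [DecidableEq ι]
    (π : ι → ι → (ι → ℝ) → ℝ) (x : ι → ℝ) (j : ι) : ℝ :=
  ∑ i, pd i (fun y => π j i y) x

/-- The second Toda Poisson tensor Ĵ₂ in (q,p)-coordinates on ℝ^{2N}
(q = `Sum.inl`, p = `Sum.inr`), in block form [[A, B], [-B, C]] with
A_{ij} = 1 for i < j, B = diag(-p₁,…,-p_N), C_{i,i+1} = e^{q_i - q_{i+1}}. -/
noncomputable def J2hat (N : ℕ) :
    (Fin N ⊕ Fin N) → (Fin N ⊕ Fin N) → ((Fin N ⊕ Fin N) → ℝ) → ℝ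
  | .inl i, .inl j => fun _ => if i < j then 1 else if j < i then -1 else 0
  | .inl i, .inr j => fun x => if i = j then -(x (.inr i)) else 0
  | .inr i, .inl j => fun x => if i = j then x (.inr i) else 0
  | .inr i, .inr j => fun x =>
      if (i : ℕ) + 1 = (j : ℕ) then Real.exp (x (.inl i) - x (.inl j))
      else if (j : ℕ) + 1 = (i : ℕ) then -Real.exp (x (.inl j) - x (.inl i))
      else 0


section helpers
variable {ι : Type*} [Fintype ι] [DecidableEq ι]

lemma pd_const (i : ι) (c : ℝ) (x : ι → ℝ) : pd i (fun _ => c) x = 0 := by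
  simp [pd]

lemma pd_apply (i c : ι) (x : ι → ℝ) :
    pd i (fun y => y c) x = (Pi.single i 1 : ι → ℝ) c := by
  have h : HasFDerivAt (fun y : ι → ℝ => y c)
      (ContinuousLinearMap.proj (R := ℝ) (φ := fun _ : ι => ℝ) c) x :=
    hasFDerivAt_apply c x
  simp [pd, h.fderiv]

lemma pd_neg_apply (i c : ι) (x : ι → ℝ) :
    pd i (fun y => -(y c)) x = -((Pi.single i 1 : ι → ℝ) c) := by
  have h : HasFDerivAt (fun y : ι → ℝ => -(y c))
      (-(ContinuousLinearMap.proj (R := ℝ) (φ := fun _ : ι => ℝ) c)) x :=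
    (hasFDerivAt_apply c x).neg
  simp [pd, h.fderiv]

lemma pd_exp (i a b : ι) (x : ι → ℝ) :
    pd i (fun y => Real.exp (y a - y b)) x
      = Real.exp (x a - x b) * ((Pi.single i 1 : ι → ℝ) a - (Pi.single i 1 : ι → ℝ) b) := by
  have hg : HasFDerivAt (fun y : ι → ℝ => y a - y b)
      (ContinuousLinearMap.proj (R := ℝ) (φ := fun _ : ι => ℝ) a
        - ContinuousLinearMap.proj b) x :=
    (hasFDerivAt_apply a x).sub (hasFDerivAt_apply b x)
  have h := hg.exp
  simp [pd, h.fderiv, smul_eq_mul]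

lemma pd_negexp (i a b : ι) (x : ι → ℝ) :
    pd i (fun y => -Real.exp (y a - y b)) x
      = -(Real.exp (x a - x b) * ((Pi.single i 1 : ι → ℝ) a - (Pi.single i 1 : ι → ℝ) b)) := by
  have hg : HasFDerivAt (fun y : ι → ℝ => y a - y b)
      (ContinuousLinearMap.proj (R := ℝ) (φ := fun _ : ι => ℝ) a
        - ContinuousLinearMap.proj b) x :=
    (hasFDerivAt_apply a x).sub (hasFDerivAt_apply b x)
  have h := hg.exp.neg
  simp [pd, h.fderiv, smul_eq_mul]
  exact pd_exp i a b x

end helpers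

/-- The modular vector field of Ĵ₂ with respect to the standard volume on ℝ^{2N}
is -Σ_{i=1}^N ∂/∂q_i, with components (-1,…,-1,0,…,0). -/
theorem modular_J2hat (N : ℕ) (x : (Fin N ⊕ Fin N) → ℝ) (j : Fin N ⊕ Fin N) :
    modvf (J2hat N) x j = Sum.elim (fun _ => (-1 : ℝ)) (fun _ => (0 : ℝ)) j := by
  cases j with
  | inl a =>
    rw [modvf, Fintype.sum_sum_type]
    have h1 : ∀ i : Fin N, pd (Sum.inl i) (fun y => J2hat N (Sum.inl a) (Sum.inl i) y) x = 0 := by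
      intro i
      simp only [J2hat]
      exact pd_const _ _ _
    have h2 : ∀ i : Fin N,
        pd (Sum.inr i) (fun y => J2hat N (Sum.inl a) (Sum.inr i) y) x
          = if a = i then -1 else 0 := by
      intro i
      by_cases h : a = i
      · subst h
        simp only [J2hat, eq_self_iff_true, if_true]
        rw [pd_neg_apply]
        simp
      · simp only [J2hat, if_neg h]
        rw [pd_const]
    rw [Finset.sum_congr rfl (fun i _ => h1 i), Finset.sum_congr rfl (fun i _ => h2 i)]
    simp
  | inr a =>
    rw [modvf, Fintype.sum_sum_type]
    have h1 : ∀ i : Fin N, pd (Sum.inl i) (fun y => J2hat N (Sum.inr a) (Sum.inl i) y) x = 0 := by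
      intro i
      by_cases h : a = i
      · subst h
        simp only [J2hat, eq_self_iff_true, if_true]
        rw [pd_apply, Pi.single_eq_of_ne (by simp)]
      · simp only [J2hat, if_neg h]
        rw [pd_const]
    have h2 : ∀ i : Fin N, pd (Sum.inr i) (fun y => J2hat N (Sum.inr a) (Sum.inr i) y) x = 0 := by
      intro i
      simp only [J2hat]
      by_cases hi : (a : ℕ) + 1 = (i : ℕ)
      · simp only [if_pos hi]
        rw [pd_exp, Pi.single_eq_of_ne (by simp), Pi.single_eq_of_ne (by simp)]
        ring
      · simp only [if_neg hi]
        by_cases hj : (i : ℕ) + 1 = (a : ℕ)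
        · simp only [if_pos hj]
          rw [pd_negexp, Pi.single_eq_of_ne (by simp), Pi.single_eq_of_ne (by simp)]
          ring
        · simp only [if_neg hj]
          rw [pd_const]
    rw [Finset.sum_congr rfl (fun i _ => h1 i), Finset.sum_congr rfl (fun i _ => h2 i)]
    simp
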